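/- Let F be a field and n ≥ 1. Let G be the simple (n+2) × (n+2) grid graph, with vertices v_{i,j} for 0 ≤ i,j ≤ n+1 and edges between orthogonally adjacent vertices. Then the n × n permanent tensor per_n = Σ_{π ∈ S_n} Π_{i=1}^n x_{i,π(i)} is a simple projection of the graph tensor T_{G,2}: per_n ≤_s T_{G,2}. -/

import Mathlib

open Classical Finset MvPolynomial

/-- A multigraph on the ambient vertex type `V`: a finite edge type together with an
assignment of an unordered pair of distinct end-vertices to every edge.
Parallel edges are allowed. -/
structure Multigraph (V : Type) where
  E : Type
  [decE : DecidableEq E]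
  [fintE : Fintype E]
  ends : E → Sym2 V
  loopless : ∀ e, ¬ (ends e).IsDiag

attribute [instance] Multigraph.decE Multigraph.fintE

namespace Multigraph

/-- The set (type) of edges incident with the vertex `v`. -/
def Inc {V : Type} (G : Multigraph V) (v : V) : Type := {e : G.E // v ∈ G.ends e}

noncomputable instance {V : Type} (G : Multigraph V) (v : V) : Fintype (G.Inc v) :=
  Fintype.ofInjective (fun e : G.Inc v => e.1) Subtype.val_injective

noncomputable instance {V : Type} (G : Multigraph V) (v : V) : DecidableEq (G.Inc v) :=
  Classical.decEq _

end Multigraph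

/-- The graph tensor `T_{G,n}`, represented by its array of coefficients:
it is the set-multilinear polynomial with one mode per vertex `v`, whose mode-`v`
variables are indexed by the functions `g : I_G(v) → Fin n`, and which equals
`∑_{f : E(G) → Fin n} ∏_{v} x^{(v)}_{f | I_G(v)}`.  Hence the coefficient of the
set-multilinear monomial `∏_v x^{(v)}_{a v}` is the number of `f : E(G) → Fin n`
whose restriction to `I_G(v)` equals `a v` for every `v`. -/
noncomputable def gTensor (F : Type) [Field F] {V : Type} (G : Multigraph V) (n : ℕ) :
    (∀ v : V, G.Inc v → Fin n) → F :=
  fun a => ∑ f : G.E → Fin n,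
    if ∀ (v : V) (e : G.Inc v), a v e = f e.1 then 1 else 0

/-- Two tensors (given by their coefficient arrays, with modes indexed by `ι` resp. `κ`
and with mode variable sets `X i` resp. `Y j`) are equivalent if one is obtained from the
other by a bijective renaming of variables that is bijective on modes. -/
def TEquiv {F : Type} [Field F] {ι κ : Type} {X : ι → Type} {Y : κ → Type}
    (S : (∀ i, X i) → F) (T : (∀ j, Y j) → F) : Prop :=
  ∃ (σ : ι ≃ κ) (e : ∀ i, X i ≃ Y (σ i)),
    ∀ b : ∀ j, Y j, T b = S fun i => (e i).symm (b (σ i))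

/-- The Kronecker product of two tensors with the same mode index type `ι`:
the `i`-th mode of `S ⊗ T` has variable set `X i × Y i`, and the coefficients multiply. -/
def kron {F : Type} [Field F] {ι : Type} {X Y : ι → Type}
    (S : (∀ i, X i) → F) (T : (∀ i, Y i) → F) : (∀ i, X i × Y i) → F :=
  fun c => S (fun i => (c i).1) * T (fun i => (c i).2)

/-- The `k`-th Kronecker power of a `d`-mode tensor with `n` variables per mode. -/
def kronPow {F : Type} [Field F] {d n : ℕ} (T : (Fin d → Fin n) → F) (k : ℕ) :
    (Fin d → (Fin k → Fin n)) → F :=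
  fun a => ∏ s : Fin k, T fun i => a i s

/-- The rank of a tensor: the least `r` such that `T` is the sum of `r` products of
linear forms, one linear form per mode (a linear form on mode `i` is recorded by its
coefficient vector `X i → F`). -/
noncomputable def tensorRank {F : Type} [Field F] {ι : Type} [Fintype ι] {X : ι → Type}
    (T : (∀ i, X i) → F) : ℕ :=
  sInf {r : ℕ | ∃ ℓ : Fin r → (∀ i, X i → F),
    ∀ a : ∀ i, X i, T a = ∑ s : Fin r, ∏ i, ℓ s i (a i)}

/-- `S` is a restriction of `T` (written `S ≤ T`): there is a bijection `σ` between the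
modes of `T` and the modes of `S` such that `S` is obtained from `T` by substituting for
each variable of mode `j` of `T` a linear form (recorded by its coefficient vector `M j y`)
in the variables of mode `σ j` of `S`. -/
def Restrict {F : Type} [Field F] {ι κ : Type} [Fintype κ] [DecidableEq κ]
    {X : ι → Type} {Y : κ → Type} [∀ j, Fintype (Y j)]
    (S : (∀ i, X i) → F) (T : (∀ j, Y j) → F) : Prop :=
  ∃ (σ : κ ≃ ι) (M : ∀ j, Y j → X (σ j) → F),
    ∀ a : ∀ i, X i, S a = ∑ b : ∀ j, Y j, T b * ∏ j, M j (b j) (a (σ j))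

/-- The tensor, viewed as an honest (set-multilinear) polynomial in the variables
`Σ i, X i`. -/
noncomputable def toPoly {F : Type} [Field F] {ι : Type} [Fintype ι] [DecidableEq ι]
    {X : ι → Type} [∀ i, Fintype (X i)] (T : (∀ i, X i) → F) :
    MvPolynomial (Σ i, X i) F :=
  ∑ a : ∀ i, X i, MvPolynomial.C (T a) * ∏ i, MvPolynomial.X (⟨i, a i⟩ : Σ i, X i)

/-- `S` is a simple projection of `T` (written `S ≤ₛ T`): `S` is obtained from `T` by a
substitution assigning to each variable of `T` either a scalar or a variable of `S`, in
such a way that the image of the variable set of each mode of `T` meets the variable set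
of at most one mode of `S`. -/
def SimpleProj {F : Type} [Field F] {ι κ : Type} [Fintype ι] [DecidableEq ι]
    [Fintype κ] [DecidableEq κ] {X : ι → Type} {Y : κ → Type}
    [∀ i, Fintype (X i)] [∀ j, Fintype (Y j)]
    (S : (∀ i, X i) → F) (T : (∀ j, Y j) → F) : Prop :=
  ∃ s : (Σ j, Y j) → F ⊕ (Σ i, X i),
    (∀ (j : κ) (y y' : Y j) (p p' : Σ i, X i),
        s ⟨j, y⟩ = Sum.inr p → s ⟨j, y'⟩ = Sum.inr p' → p.1 = p'.1) ∧
    toPoly S = MvPolynomial.aeval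
      (fun q => Sum.elim (fun c => (MvPolynomial.C c : MvPolynomial (Σ i, X i) F))
        (fun p => MvPolynomial.X p) (s q)) (toPoly T)

/-- Orthogonal adjacency in the grid: `|i−i'| + |j−j'| = 1`. -/
abbrev gridAdj {m : ℕ} (a b : Fin m × Fin m) : Prop :=
  ((a.1 : ℤ) - (b.1 : ℤ)).natAbs + ((a.2 : ℤ) - (b.2 : ℤ)).natAbs = 1

/-- A lexicographic comparison used to pick exactly one ordered representative of each
unordered adjacent pair. -/
abbrev lexLt {m : ℕ} (a b : Fin m × Fin m) : Prop :=
  a.1 < b.1 ∨ (a.1 = b.1 ∧ a.2 < b.2)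

/-- The simple `m × m` grid graph: vertices `(i,j)`, edges between orthogonally adjacent
vertices. -/
def gridMG (m : ℕ) : Multigraph (Fin m × Fin m) where
  E := {p : (Fin m × Fin m) × (Fin m × Fin m) // gridAdj p.1 p.2 ∧ lexLt p.1 p.2}
  ends := fun p => s(p.1.1, p.1.2)
  loopless := fun p h => by
    have h' := Sym2.mk_isDiag_iff.mp h
    rcases p.2.2 with h1 | ⟨-, h2⟩
    · rw [h'] at h1; exact lt_irrefl _ h1
    · rw [h'] at h2; exact lt_irrefl _ h2

/-- The `n × n` permanent tensor `per_n = Σ_{π ∈ S_n} Π_{i=1}^n x_{i,π(i)}`, given by its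
coefficient array: the coefficient of `Π_i x_{i, a(i)}` is the number of permutations `π`
with `π(i) = a(i)` for all `i`. -/
noncomputable def permTensor (F : Type) [Field F] (n : ℕ) : (Fin n → Fin n) → F :=
  fun a => ∑ π : Equiv.Perm (Fin n), if ∀ i, a i = π i then 1 else 0

-- ==== our development ====
namespace PG

variable {n : ℕ}

/-- horizontal edge (i,j)-(i,j+1) -/
def mkH (n : ℕ) (i j : ℕ) (hi : i ≤ n+1) (hj : j ≤ n) : (gridMG (n+2)).E :=
  ⟨((⟨i, by omega⟩, ⟨j, by omega⟩), (⟨i, by omega⟩, ⟨j+1, by omega⟩)), by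
    refine ⟨?_, Or.inr ⟨rfl, ?_⟩⟩
    · show (((i:ℕ):ℤ) - ((i:ℕ):ℤ)).natAbs + (((j:ℕ):ℤ) - ((j+1:ℕ):ℤ)).natAbs = 1
      omega
    · show j < j+1
      omega⟩

/-- vertical edge (i,j)-(i+1,j) -/
def mkV (n : ℕ) (i j : ℕ) (hi : i ≤ n) (hj : j ≤ n+1) : (gridMG (n+2)).E :=
  ⟨((⟨i, by omega⟩, ⟨j, by omega⟩), (⟨i+1, by omega⟩, ⟨j, by omega⟩)), by
    refine ⟨?_, Or.inl ?_⟩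
    · show (((i:ℕ):ℤ) - ((i+1:ℕ):ℤ)).natAbs + (((j:ℕ):ℤ) - ((j:ℕ):ℤ)).natAbs = 1
      omega
    · show i < i+1
      omega⟩

lemma edge_cases (e : (gridMG (n+2)).E) :
    (e.val.1.1 = e.val.2.1 ∧ e.val.2.2.val = e.val.1.2.val + 1) ∨
    (e.val.1.2 = e.val.2.2 ∧ e.val.2.1.val = e.val.1.1.val + 1) := by
  obtain ⟨hadj, hlex⟩ := e.prop
  have h1 : (((e.val.1.1.val:ℤ)) - (e.val.2.1.val:ℤ)).natAbs
      + (((e.val.1.2.val:ℤ)) - (e.val.2.2.val:ℤ)).natAbs = 1 := hadj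
  rcases hlex with h | ⟨h, h'⟩
  · right
    have hv : e.val.1.1.val < e.val.2.1.val := h
    constructor
    · apply Fin.ext; omega
    · omega
  · left
    have hv : e.val.1.2.val < e.val.2.2.val := h'
    have he : e.val.1.1.val = e.val.2.1.val := congrArg Fin.val h
    exact ⟨h, by omega⟩

/-- horizontal canonical form -/
lemma eq_mkH (e : (gridMG (n+2)).E) (h : e.val.1.1 = e.val.2.1) :
    ∃ (hi : e.val.1.1.val ≤ n+1) (hj : e.val.1.2.val ≤ n),
      e = mkH n e.val.1.1.val e.val.1.2.val hi hj := by
  rcases edge_cases e with ⟨h1, h2⟩ | ⟨h1, h2⟩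
  · have hj : e.val.1.2.val ≤ n := by have := e.val.2.2.isLt; omega
    refine ⟨by omega, hj, ?_⟩
    apply Subtype.ext
    have hcv := congrArg Fin.val h1
    refine Prod.ext_iff.mpr ⟨Prod.ext_iff.mpr ⟨?_, ?_⟩, Prod.ext_iff.mpr ⟨?_, ?_⟩⟩ <;>
      apply Fin.ext <;> simp only [mkH] <;> omega
  · exfalso
    have := congrArg Fin.val h
    omega

lemma eq_mkV (e : (gridMG (n+2)).E) (h : e.val.1.1 ≠ e.val.2.1) :
    ∃ (hi : e.val.1.1.val ≤ n) (hj : e.val.1.2.val ≤ n+1),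
      e = mkV n e.val.1.1.val e.val.1.2.val hi hj := by
  rcases edge_cases e with ⟨h1, h2⟩ | ⟨h1, h2⟩
  · exact absurd h1 h
  · have hi : e.val.1.1.val ≤ n := by have := e.val.2.1.isLt; omega
    refine ⟨hi, by omega, ?_⟩
    apply Subtype.ext
    have hcv := congrArg Fin.val h1
    refine Prod.ext_iff.mpr ⟨Prod.ext_iff.mpr ⟨?_, ?_⟩, Prod.ext_iff.mpr ⟨?_, ?_⟩⟩ <;>
      apply Fin.ext <;> simp only [mkV] <;> omega

end PG

namespace PG
variable {n : ℕ}

/-- value on vertical edges `a`, horizontal edges `b` -/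
def passPat (v : Fin (n+2) × Fin (n+2)) (a b : Fin 2) : (gridMG (n+2)).Inc v → Fin 2 :=
  fun e => if e.1.val.1.2 = e.1.val.2.2 then a else b

/-- the "turn" pattern: outgoing (down/right) edges 1, incoming (up/left) edges 0 -/
def spPat (v : Fin (n+2) × Fin (n+2)) : (gridMG (n+2)).Inc v → Fin 2 :=
  fun e => if e.1.val.1 = v then 1 else 0

def pnat (π : Equiv.Perm (Fin n)) (k : ℕ) : ℕ :=
  if h : k < n then (π ⟨k, h⟩).val else 0

lemma pnat_lt (π : Equiv.Perm (Fin n)) (k : ℕ) (h : k < n) : pnat π k < n := by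
  rw [pnat, dif_pos h]; exact (π ⟨k, h⟩).isLt

def phi (n : ℕ) (π : Equiv.Perm (Fin n)) : (gridMG (n+2)).E → Fin 2 := fun e =>
  if e.val.1.1 = e.val.2.1 then
    (if 1 ≤ e.val.1.1.val ∧ e.val.1.1.val ≤ n ∧ pnat π (e.val.1.1.val - 1) + 1 ≤ e.val.1.2.val
      then 1 else 0)
  else
    (if 1 ≤ e.val.1.2.val ∧ e.val.1.2.val ≤ n ∧ pnat π.symm (e.val.1.2.val - 1) + 1 ≤ e.val.1.1.val
      then 1 else 0)

lemma phi_mkH (π : Equiv.Perm (Fin n)) (i j : ℕ) (hi : i ≤ n+1) (hj : j ≤ n) :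
    phi n π (mkH n i j hi hj) =
      if 1 ≤ i ∧ i ≤ n ∧ pnat π (i - 1) + 1 ≤ j then 1 else 0 := by
  simp only [phi, mkH, Fin.mk.injEq]
  simp

lemma phi_mkV (π : Equiv.Perm (Fin n)) (i j : ℕ) (hi : i ≤ n) (hj : j ≤ n+1) :
    phi n π (mkV n i j hi hj) =
      if 1 ≤ j ∧ j ≤ n ∧ pnat π.symm (j - 1) + 1 ≤ i then 1 else 0 := by
  simp only [phi, mkV, Fin.mk.injEq]
  rw [if_neg (by omega)]
  rfl

def intl (n : ℕ) (v : Fin (n+2) × Fin (n+2)) : Prop :=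
  1 ≤ v.1.val ∧ v.1.val ≤ n ∧ 1 ≤ v.2.val ∧ v.2.val ≤ n

instance (n : ℕ) (v : Fin (n+2) × Fin (n+2)) : Decidable (intl n v) := by
  unfold intl; infer_instance

def bA (n : ℕ) (v : Fin (n+2) × Fin (n+2)) : Fin 2 :=
  if v.1.val = n+1 ∧ 1 ≤ v.2.val ∧ v.2.val ≤ n then 1 else 0

def bB (n : ℕ) (v : Fin (n+2) × Fin (n+2)) : Fin 2 :=
  if v.2.val = n+1 ∧ 1 ≤ v.1.val ∧ v.1.val ≤ n then 1 else 0

noncomputable def sub (F : Type) [Field F] (n : ℕ) :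
    (Σ v : Fin (n+2) × Fin (n+2), (gridMG (n+2)).Inc v → Fin 2) →
      F ⊕ (Σ _ : Fin n, Fin n) :=
  fun x =>
    if h : intl n x.1 then
      if x.2 = spPat x.1 then
        Sum.inr ⟨⟨x.1.1.val - 1, by obtain ⟨a, b, c, d⟩ := h; omega⟩,
                 ⟨x.1.2.val - 1, by obtain ⟨a, b, c, d⟩ := h; omega⟩⟩
      else if ∃ a b, x.2 = passPat x.1 a b then Sum.inl 1 else Sum.inl 0
    else
      if x.2 = passPat x.1 (bA n x.1) (bB n x.1) then Sum.inl 1 else Sum.inl 0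

def resv (f : (gridMG (n+2)).E → Fin 2) (v : Fin (n+2) × Fin (n+2)) :
    (gridMG (n+2)).Inc v → Fin 2 := fun e => f e.1

def fH (f : (gridMG (n+2)).E → Fin 2) (i j : ℕ) : ℕ :=
  if h : i ≤ n+1 ∧ j ≤ n then (f (mkH n i j h.1 h.2)).val else 0

def fV (f : (gridMG (n+2)).E → Fin 2) (i j : ℕ) : ℕ :=
  if h : i ≤ n ∧ j ≤ n+1 then (f (mkV n i j h.1 h.2)).val else 0

lemma fH_eq (f : (gridMG (n+2)).E → Fin 2) {i j : ℕ} (hi : i ≤ n+1) (hj : j ≤ n) :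
    fH f i j = (f (mkH n i j hi hj)).val := dif_pos ⟨hi, hj⟩

lemma fV_eq (f : (gridMG (n+2)).E → Fin 2) {i j : ℕ} (hi : i ≤ n) (hj : j ≤ n+1) :
    fV f i j = (f (mkV n i j hi hj)).val := dif_pos ⟨hi, hj⟩

lemma fH_le (f : (gridMG (n+2)).E → Fin 2) (i j : ℕ) : fH f i j ≤ 1 := by
  rw [fH]; split
  · exact Fin.is_le _
  · omega

lemma fV_le (f : (gridMG (n+2)).E → Fin 2) (i j : ℕ) : fV f i j ≤ 1 := by
  rw [fV]; split
  · exact Fin.is_le _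
  · omega

-- membership of a vertex in the four edges around it
lemma mem_ends (e : (gridMG (n+2)).E) (v : Fin (n+2) × Fin (n+2)) :
    v ∈ (gridMG (n+2)).ends e ↔ v = e.val.1 ∨ v = e.val.2 := Sym2.mem_iff

lemma memR (v : Fin (n+2) × Fin (n+2)) (hi : v.1.val ≤ n+1) (hj : v.2.val ≤ n) :
    v ∈ (gridMG (n+2)).ends (mkH n v.1.val v.2.val hi hj) :=
  (mem_ends _ _).mpr (Or.inl (Prod.ext_iff.mpr ⟨Fin.ext rfl, Fin.ext rfl⟩))

lemma memL (v : Fin (n+2) × Fin (n+2)) (hj1 : 1 ≤ v.2.val) (hj : v.2.val - 1 ≤ n) :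
    v ∈ (gridMG (n+2)).ends (mkH n v.1.val (v.2.val - 1) (by omega) hj) :=
  (mem_ends _ _).mpr (Or.inr (Prod.ext_iff.mpr
    ⟨Fin.ext rfl, Fin.ext (by simp only [mkH]; omega)⟩))

lemma memD (v : Fin (n+2) × Fin (n+2)) (hi : v.1.val ≤ n) (hj : v.2.val ≤ n+1) :
    v ∈ (gridMG (n+2)).ends (mkV n v.1.val v.2.val hi hj) :=
  (mem_ends _ _).mpr (Or.inl (Prod.ext_iff.mpr ⟨Fin.ext rfl, Fin.ext rfl⟩))

lemma memU (v : Fin (n+2) × Fin (n+2)) (hi1 : 1 ≤ v.1.val) (hi : v.1.val - 1 ≤ n)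
    (hj : v.2.val ≤ n+1) :
    v ∈ (gridMG (n+2)).ends (mkV n (v.1.val - 1) v.2.val hi hj) :=
  (mem_ends _ _).mpr (Or.inr (Prod.ext_iff.mpr
    ⟨Fin.ext (by simp only [mkV]; omega), Fin.ext rfl⟩))

end PG

namespace PG
variable {n : ℕ}

def Good (F : Type) [Field F] (n : ℕ) (f : (gridMG (n+2)).E → Fin 2) : Prop :=
  ∀ v, sub F n ⟨v, resv f v⟩ ≠ Sum.inl 0

variable {F : Type} [Field F]

lemma good_cases {f : (gridMG (n+2)).E → Fin 2} (hf : Good F n f)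
    (v : Fin (n+2) × Fin (n+2)) :
    (intl n v ∧ (resv f v = spPat v ∨ ∃ a b, resv f v = passPat v a b)) ∨
    (¬ intl n v ∧ resv f v = passPat v (bA n v) (bB n v)) := by
  have h := hf v
  rw [sub] at h
  by_cases h1 : intl n v
  · rw [dif_pos h1] at h
    by_cases h2 : resv f v = spPat v
    · exact Or.inl ⟨h1, Or.inl h2⟩
    · rw [if_neg h2] at h
      by_cases h3 : ∃ a b, resv f v = passPat v a b
      · exact Or.inl ⟨h1, Or.inr h3⟩
      · rw [if_neg h3] at h
        exact absurd rfl h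
  · rw [dif_neg h1] at h
    by_cases h4 : resv f v = passPat v (bA n v) (bB n v)
    · exact Or.inr ⟨h1, h4⟩
    · rw [if_neg h4] at h
      exact absurd rfl h

-- pattern evaluations
lemma passPat_H (v : Fin (n+2) × Fin (n+2)) (a b : Fin 2) {i j : ℕ} (hi : i ≤ n+1) (hj : j ≤ n)
    (hm : v ∈ (gridMG (n+2)).ends (mkH n i j hi hj)) :
    passPat v a b ⟨mkH n i j hi hj, hm⟩ = b := by
  show (if (mkH n i j hi hj).val.1.2 = (mkH n i j hi hj).val.2.2 then a else b) = b
  rw [if_neg]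
  intro hc
  have := congrArg Fin.val hc
  simp only [mkH] at this
  omega

lemma passPat_V (v : Fin (n+2) × Fin (n+2)) (a b : Fin 2) {i j : ℕ} (hi : i ≤ n) (hj : j ≤ n+1)
    (hm : v ∈ (gridMG (n+2)).ends (mkV n i j hi hj)) :
    passPat v a b ⟨mkV n i j hi hj, hm⟩ = a := by
  show (if (mkV n i j hi hj).val.1.2 = (mkV n i j hi hj).val.2.2 then a else b) = a
  rw [if_pos]
  rfl

lemma spPat_eval (v : Fin (n+2) × Fin (n+2)) (e : (gridMG (n+2)).Inc v) :
    spPat v e = if e.1.val.1 = v then 1 else 0 := rfl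

lemma first_mkH (i j : ℕ) (hi : i ≤ n+1) (hj : j ≤ n) (v : Fin (n+2) × Fin (n+2)) :
    (mkH n i j hi hj).val.1 = v ↔ v.1.val = i ∧ v.2.val = j := by
  rw [Prod.ext_iff, Fin.ext_iff, Fin.ext_iff]
  simp only [mkH]
  omega

lemma first_mkV (i j : ℕ) (hi : i ≤ n) (hj : j ≤ n+1) (v : Fin (n+2) × Fin (n+2)) :
    (mkV n i j hi hj).val.1 = v ↔ v.1.val = i ∧ v.2.val = j := by
  rw [Prod.ext_iff, Fin.ext_iff, Fin.ext_iff]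
  simp only [mkV]
  omega

-- boundary facts
lemma notIntl_pat {f : (gridMG (n+2)).E → Fin 2} (hf : Good F n f)
    {v : Fin (n+2) × Fin (n+2)} (hv : ¬ intl n v) :
    resv f v = passPat v (bA n v) (bB n v) := by
  rcases good_cases hf v with ⟨h1, _⟩ | ⟨_, h⟩
  · exact absurd h1 hv
  · exact h

lemma fH_of_pat {f : (gridMG (n+2)).E → Fin 2} {v : Fin (n+2) × Fin (n+2)} {a b : Fin 2}
    (hp : resv f v = passPat v a b) (hi : v.1.val ≤ n+1) (hj : v.2.val ≤ n) :
    fH f v.1.val v.2.val = b.val := by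
  have := congrFun hp ⟨mkH n v.1.val v.2.val hi hj, memR v hi hj⟩
  rw [passPat_H] at this
  rw [fH_eq f hi hj]
  exact congrArg Fin.val this

lemma fH_of_pat' {f : (gridMG (n+2)).E → Fin 2} {v : Fin (n+2) × Fin (n+2)} {a b : Fin 2}
    (hp : resv f v = passPat v a b) (hj1 : 1 ≤ v.2.val) (hj : v.2.val - 1 ≤ n) :
    fH f v.1.val (v.2.val - 1) = b.val := by
  have := congrFun hp ⟨mkH n v.1.val (v.2.val - 1) (by omega) hj, memL v hj1 hj⟩
  rw [passPat_H] at this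
  rw [fH_eq f (by omega) hj]
  exact congrArg Fin.val this

lemma fV_of_pat {f : (gridMG (n+2)).E → Fin 2} {v : Fin (n+2) × Fin (n+2)} {a b : Fin 2}
    (hp : resv f v = passPat v a b) (hi : v.1.val ≤ n) (hj : v.2.val ≤ n+1) :
    fV f v.1.val v.2.val = a.val := by
  have := congrFun hp ⟨mkV n v.1.val v.2.val hi hj, memD v hi hj⟩
  rw [passPat_V] at this
  rw [fV_eq f hi hj]
  exact congrArg Fin.val this

lemma fV_of_pat' {f : (gridMG (n+2)).E → Fin 2} {v : Fin (n+2) × Fin (n+2)} {a b : Fin 2}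
    (hp : resv f v = passPat v a b) (hi1 : 1 ≤ v.1.val) (hi : v.1.val - 1 ≤ n)
    (hj : v.2.val ≤ n+1) :
    fV f (v.1.val - 1) v.2.val = a.val := by
  have := congrFun hp ⟨mkV n (v.1.val - 1) v.2.val hi hj, memU v hi1 hi hj⟩
  rw [passPat_V] at this
  rw [fV_eq f hi hj]
  exact congrArg Fin.val this

end PG

namespace PG
variable {n : ℕ} {F : Type} [Field F]

def vx (n i j : ℕ) (hi : i < n+2) (hj : j < n+2) : Fin (n+2) × Fin (n+2) :=
  (⟨i, hi⟩, ⟨j, hj⟩)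

section evalAt
variable {f : (gridMG (n+2)).E → Fin 2} {i j : ℕ} {hi : i < n+2} {hj : j < n+2} {a b : Fin 2}

lemma E1 (hp : resv f (vx n i j hi hj) = passPat _ a b) (hjn : j ≤ n) :
    fH f i j = b.val :=
  fH_of_pat hp (show i ≤ n+1 by omega) hjn

lemma E2 (hp : resv f (vx n i j hi hj) = passPat _ a b) (hj1 : 1 ≤ j) :
    fH f i (j-1) = b.val :=
  fH_of_pat' hp hj1 (show j - 1 ≤ n by omega)

lemma E3 (hp : resv f (vx n i j hi hj) = passPat _ a b) (hin : i ≤ n) :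
    fV f i j = a.val :=
  fV_of_pat hp hin (show j ≤ n+1 by omega)

lemma E4 (hp : resv f (vx n i j hi hj) = passPat _ a b) (hi1 : 1 ≤ i) :
    fV f (i-1) j = a.val :=
  fV_of_pat' hp hi1 (show i - 1 ≤ n by omega) (show j ≤ n+1 by omega)

lemma S1 (hs : resv f (vx n i j hi hj) = spPat _) (hjn : j ≤ n) :
    fH f i j = 1 := by
  have hm := memR (vx n i j hi hj) (show i ≤ n+1 by omega) hjn
  have h2 := congrFun hs ⟨mkH n i j (show i ≤ n+1 by omega) hjn, hm⟩
  erw [spPat_eval, if_pos ((first_mkH i j (by omega) hjn _).mpr ⟨rfl, rfl⟩)] at h2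
  rw [fH_eq f (show i ≤ n+1 by omega) hjn]
  exact congrArg Fin.val h2

lemma S2 (hs : resv f (vx n i j hi hj) = spPat _) (hj1 : 1 ≤ j) :
    fH f i (j-1) = 0 := by
  have hm := memL (vx n i j hi hj) hj1 (show j - 1 ≤ n by omega)
  have h2 := congrFun hs ⟨mkH n i (j-1) (show i ≤ n+1 by omega) (show j - 1 ≤ n by omega), hm⟩
  erw [spPat_eval, if_neg] at h2
  · rw [fH_eq f (show i ≤ n+1 by omega) (show j - 1 ≤ n by omega)]
    exact congrArg Fin.val h2
  · rw [first_mkH]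
    rintro ⟨-, h⟩
    have : j = j - 1 := h
    omega

lemma S3 (hs : resv f (vx n i j hi hj) = spPat _) (hin : i ≤ n) :
    fV f i j = 1 := by
  have hm := memD (vx n i j hi hj) hin (show j ≤ n+1 by omega)
  have h2 := congrFun hs ⟨mkV n i j hin (show j ≤ n+1 by omega), hm⟩
  erw [spPat_eval, if_pos ((first_mkV i j hin (by omega) _).mpr ⟨rfl, rfl⟩)] at h2
  rw [fV_eq f hin (show j ≤ n+1 by omega)]
  exact congrArg Fin.val h2

lemma S4 (hs : resv f (vx n i j hi hj) = spPat _) (hi1 : 1 ≤ i) :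
    fV f (i-1) j = 0 := by
  have hm := memU (vx n i j hi hj) hi1 (show i - 1 ≤ n by omega) (show j ≤ n+1 by omega)
  have h2 := congrFun hs ⟨mkV n (i-1) j (show i - 1 ≤ n by omega) (show j ≤ n+1 by omega), hm⟩
  erw [spPat_eval, if_neg] at h2
  · rw [fV_eq f (show i - 1 ≤ n by omega) (show j ≤ n+1 by omega)]
    exact congrArg Fin.val h2
  · rw [first_mkV]
    rintro ⟨h, -⟩
    have : i = i - 1 := h
    omega

end evalAt

section bdry
variable {f : (gridMG (n+2)).E → Fin 2} (hf : Good F n f)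

lemma not_intl_vx {i j : ℕ} (hi : i < n+2) (hj : j < n+2)
    (h : i = 0 ∨ i = n+1 ∨ j = 0 ∨ j = n+1) : ¬ intl n (vx n i j hi hj) := by
  rintro ⟨h1, h2, h3, h4⟩
  simp only [vx] at h1 h2 h3 h4
  omega

lemma bB_val {i j : ℕ} (hi : i < n+2) (hj : j < n+2) :
    (bB n (vx n i j hi hj)).val = if j = n+1 ∧ 1 ≤ i ∧ i ≤ n then 1 else 0 := by
  show ((if j = n+1 ∧ 1 ≤ i ∧ i ≤ n then 1 else 0 : Fin 2)).val = _
  split_ifs <;> rfl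

lemma bA_val {i j : ℕ} (hi : i < n+2) (hj : j < n+2) :
    (bA n (vx n i j hi hj)).val = if i = n+1 ∧ 1 ≤ j ∧ j ≤ n then 1 else 0 := by
  show ((if i = n+1 ∧ 1 ≤ j ∧ j ≤ n then 1 else 0 : Fin 2)).val = _
  split_ifs <;> rfl

include hf

lemma bdry_pat {i j : ℕ} (hi : i < n+2) (hj : j < n+2)
    (h : i = 0 ∨ i = n+1 ∨ j = 0 ∨ j = n+1) :
    resv f (vx n i j hi hj) = passPat _ (bA n (vx n i j hi hj)) (bB n (vx n i j hi hj)) :=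
  notIntl_pat hf (not_intl_vx hi hj h)

lemma fH_top (j : ℕ) (hj : j ≤ n) : fH f 0 j = 0 := by
  rw [E1 (bdry_pat hf (show (0:ℕ) < n+2 by omega) (show j < n+2 by omega) (Or.inl rfl)) hj,
    bB_val, if_neg (by omega)]

lemma fH_bot (j : ℕ) (hj : j ≤ n) : fH f (n+1) j = 0 := by
  rw [E1 (bdry_pat hf (show n+1 < n+2 by omega) (show j < n+2 by omega) (Or.inr (Or.inl rfl))) hj,
    bB_val, if_neg (by omega)]

lemma fH_left (i : ℕ) (hi : i < n+2) : fH f i 0 = 0 := by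
  rw [E1 (bdry_pat hf hi (show (0:ℕ) < n+2 by omega) (Or.inr (Or.inr (Or.inl rfl)))) (by omega),
    bB_val, if_neg (by omega)]

lemma fH_right (i : ℕ) (hi1 : 1 ≤ i) (hin : i ≤ n) : fH f i n = 1 := by
  have h := E2 (bdry_pat hf (show i < n+2 by omega) (show n+1 < n+2 by omega)
    (Or.inr (Or.inr (Or.inr rfl)))) (show 1 ≤ n+1 by omega)
  rw [show n+1-1 = n by omega] at h
  rw [h, bB_val, if_pos ⟨rfl, hi1, hin⟩]

lemma fV_top (j : ℕ) (hj : j < n+2) : fV f 0 j = 0 := by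
  rw [E3 (bdry_pat hf (show (0:ℕ) < n+2 by omega) hj (Or.inl rfl)) (by omega),
    bA_val, if_neg (by omega)]

lemma fV_left (i : ℕ) (hi : i ≤ n) : fV f i 0 = 0 := by
  rw [E3 (bdry_pat hf (show i < n+2 by omega) (show (0:ℕ) < n+2 by omega)
      (Or.inr (Or.inr (Or.inl rfl)))) hi,
    bA_val, if_neg (by omega)]

lemma fV_right (i : ℕ) (hi : i ≤ n) : fV f i (n+1) = 0 := by
  rw [E3 (bdry_pat hf (show i < n+2 by omega) (show n+1 < n+2 by omega)
      (Or.inr (Or.inr (Or.inr rfl)))) hi,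
    bA_val, if_neg (by omega)]

lemma fV_bot (j : ℕ) (hj1 : 1 ≤ j) (hjn : j ≤ n) : fV f n j = 1 := by
  have h := E4 (bdry_pat hf (show n+1 < n+2 by omega) (show j < n+2 by omega)
    (Or.inr (Or.inl rfl))) (show 1 ≤ n+1 by omega)
  rw [show n+1-1 = n by omega] at h
  rw [h, bA_val, if_pos ⟨rfl, hj1, hjn⟩]

lemma internal_cases {i j : ℕ} (hi1 : 1 ≤ i) (hin : i ≤ n) (hj1 : 1 ≤ j) (hjn : j ≤ n) :
    (fV f (i-1) j = 0 ∧ fV f i j = 1 ∧ fH f i (j-1) = 0 ∧ fH f i j = 1 ∧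
      resv f (vx n i j (by omega) (by omega)) = spPat _) ∨
    (fV f (i-1) j = fV f i j ∧ fH f i (j-1) = fH f i j ∧
      resv f (vx n i j (by omega) (by omega)) ≠ spPat _) := by
  rcases good_cases hf (vx n i j (by omega) (by omega)) with ⟨-, hs | ⟨a, b, hp⟩⟩ | ⟨hni, -⟩
  · exact Or.inl ⟨S4 hs hi1, S3 hs hin, S2 hs hj1, S1 hs hjn, hs⟩
  · refine Or.inr ⟨?_, ?_, ?_⟩
    · rw [E4 hp hi1, E3 hp hin]
    · rw [E2 hp hj1, E1 hp hjn]
    · intro hs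
      have h1 := S4 hs hi1
      have h2 := S3 hs hin
      rw [E4 hp hi1, E3 hp hin] at *
      omega
  · exact absurd ⟨hi1, hin, hj1, hjn⟩ hni

end bdry
end PG

namespace PG
variable {n : ℕ} {F : Type} [Field F]

noncomputable def cIdx (f : (gridMG (n+2)).E → Fin 2) (i : ℕ) : ℕ :=
  if h : ∃ j, j ≤ n ∧ fH f i j = 1 then Nat.find h else 0

noncomputable def rIdx (f : (gridMG (n+2)).E → Fin 2) (j : ℕ) : ℕ :=
  if h : ∃ i, i ≤ n ∧ fV f i j = 1 then Nat.find h else 0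

section core
variable {f : (gridMG (n+2)).E → Fin 2} (hf : Good F n f)
include hf

lemma cIdx_spec {i : ℕ} (hi1 : 1 ≤ i) (hin : i ≤ n) :
    1 ≤ cIdx f i ∧ cIdx f i ≤ n ∧ ∀ j, j ≤ n → (fH f i j = 1 ↔ cIdx f i ≤ j) := by
  have hex : ∃ j, j ≤ n ∧ fH f i j = 1 := ⟨n, le_rfl, fH_right hf i hi1 hin⟩
  have hc : cIdx f i = Nat.find hex := dif_pos hex
  have hspec := Nat.find_spec hex
  have hle : cIdx f i ≤ n := by rw [hc]; exact (Nat.find_spec hex).1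
  have h1 : 1 ≤ cIdx f i := by
    rcases Nat.eq_zero_or_pos (cIdx f i) with h | h
    · exfalso
      have h0 := fH_left hf i (by omega)
      rw [← h, hc] at h0
      exact absurd hspec.2 (by omega)
    · exact h
  refine ⟨h1, hle, fun j hj => ⟨fun hfj => ?_, fun hcj => ?_⟩⟩
  · rw [hc]; exact Nat.find_min' hex ⟨hj, hfj⟩
  · -- induction from cIdx up to j
    have key : ∀ j, cIdx f i ≤ j → j ≤ n → fH f i j = 1 := by
      intro j
      induction j with
      | zero => intro h h'; omega
      | succ m ih =>
        intro hcm hmn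
        rcases Nat.lt_or_ge m (cIdx f i) with h | h
        · have heq : cIdx f i = m + 1 := by omega
          rw [← heq, hc]
          exact hspec.2
        · have hm1 := ih h (by omega)
          rcases internal_cases hf hi1 hin (show 1 ≤ m+1 by omega) hmn with
            ⟨-, -, -, h4, -⟩ | ⟨-, h2, -⟩
          · exact h4
          · rw [show m+1-1 = m from rfl] at h2
            rw [← h2]
            exact hm1
    exact key j hcj hj

lemma rIdx_spec {j : ℕ} (hj1 : 1 ≤ j) (hjn : j ≤ n) :
    1 ≤ rIdx f j ∧ rIdx f j ≤ n ∧ ∀ i, i ≤ n → (fV f i j = 1 ↔ rIdx f j ≤ i) := by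
  have hex : ∃ i, i ≤ n ∧ fV f i j = 1 := ⟨n, le_rfl, fV_bot hf j hj1 hjn⟩
  have hc : rIdx f j = Nat.find hex := dif_pos hex
  have hspec := Nat.find_spec hex
  have hle : rIdx f j ≤ n := by rw [hc]; exact (Nat.find_spec hex).1
  have h1 : 1 ≤ rIdx f j := by
    rcases Nat.eq_zero_or_pos (rIdx f j) with h | h
    · exfalso
      have h0 := fV_top hf j (by omega)
      rw [← h, hc] at h0
      exact absurd hspec.2 (by omega)
    · exact h
  refine ⟨h1, hle, fun i hi => ⟨fun hfj => ?_, fun hcj => ?_⟩⟩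
  · rw [hc]; exact Nat.find_min' hex ⟨hi, hfj⟩
  · have key : ∀ i, rIdx f j ≤ i → i ≤ n → fV f i j = 1 := by
      intro i
      induction i with
      | zero => intro h h'; omega
      | succ m ih =>
        intro hcm hmn
        rcases Nat.lt_or_ge m (rIdx f j) with h | h
        · have heq : rIdx f j = m + 1 := by omega
          rw [← heq, hc]
          exact hspec.2
        · have hm1 := ih h (by omega)
          rcases internal_cases hf (show 1 ≤ m+1 by omega) hmn hj1 hjn with
            ⟨-, h2, -, -, -⟩ | ⟨h2, -, -⟩
          · exact h2
          · rw [show m+1-1 = m from rfl] at h2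
            rw [h2] at hm1
            exact hm1
    exact key i hcj hi

lemma sp_iff_row {i j : ℕ} (hi1 : 1 ≤ i) (hin : i ≤ n) (hj1 : 1 ≤ j) (hjn : j ≤ n) :
    resv f (vx n i j (by omega) (by omega)) = spPat _ ↔ j = cIdx f i := by
  obtain ⟨hc1, hcn, hciff⟩ := cIdx_spec hf hi1 hin
  constructor
  · intro hs
    have e1 := S1 hs hjn
    have e2 := S2 hs hj1
    have l1 : cIdx f i ≤ j := (hciff j hjn).mp e1
    have l2 : ¬ (cIdx f i ≤ j - 1) := fun hc => by
      rw [(hciff (j-1) (by omega)).mpr hc] at e2; omega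
    omega
  · intro hj
    subst hj
    have e1 : fH f i (cIdx f i) = 1 := (hciff _ hcn).mpr le_rfl
    have e2 : fH f i (cIdx f i - 1) ≠ 1 := fun hc =>
      absurd ((hciff _ (by omega)).mp hc) (by omega)
    rcases internal_cases hf hi1 hin hc1 hcn with ⟨-, -, -, -, hs⟩ | ⟨-, h2, -⟩
    · exact hs
    · rw [h2] at e2
      exact absurd e1 e2

lemma sp_iff_col {i j : ℕ} (hi1 : 1 ≤ i) (hin : i ≤ n) (hj1 : 1 ≤ j) (hjn : j ≤ n) :
    resv f (vx n i j (by omega) (by omega)) = spPat _ ↔ i = rIdx f j := by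
  obtain ⟨hc1, hcn, hciff⟩ := rIdx_spec hf hj1 hjn
  constructor
  · intro hs
    have e1 := S3 hs hin
    have e2 := S4 hs hi1
    have l1 : rIdx f j ≤ i := (hciff i hin).mp e1
    have l2 : ¬ (rIdx f j ≤ i - 1) := fun hc => by
      rw [(hciff (i-1) (by omega)).mpr hc] at e2; omega
    omega
  · intro hi
    subst hi
    have e1 : fV f (rIdx f j) j = 1 := (hciff _ hcn).mpr le_rfl
    have e2 : fV f (rIdx f j - 1) j ≠ 1 := fun hc =>
      absurd ((hciff _ (by omega)).mp hc) (by omega)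
    rcases internal_cases hf hc1 hcn hj1 hjn with ⟨-, -, -, -, hs⟩ | ⟨h2, -, -⟩
    · exact hs
    · rw [h2] at e2
      exact absurd e1 e2

lemma rc_inv {i : ℕ} (hi1 : 1 ≤ i) (hin : i ≤ n) : rIdx f (cIdx f i) = i := by
  obtain ⟨hc1, hcn, -⟩ := cIdx_spec hf hi1 hin
  have hs := (sp_iff_row hf hi1 hin hc1 hcn).mpr rfl
  exact ((sp_iff_col hf hi1 hin hc1 hcn).mp hs).symm

lemma cr_inv {j : ℕ} (hj1 : 1 ≤ j) (hjn : j ≤ n) : cIdx f (rIdx f j) = j := by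
  obtain ⟨hc1, hcn, -⟩ := rIdx_spec hf hj1 hjn
  have hs := (sp_iff_col hf hc1 hcn hj1 hjn).mpr rfl
  exact ((sp_iff_row hf hc1 hcn hj1 hjn).mp hs).symm

end core

noncomputable def permOf (f : (gridMG (n+2)).E → Fin 2) (hf : Good F n f) :
    Equiv.Perm (Fin n) where
  toFun k := ⟨cIdx f (k.val + 1) - 1, by
    obtain ⟨h1, h2, -⟩ := cIdx_spec hf (show 1 ≤ k.val+1 by omega) (by have := k.isLt; omega)
    omega⟩
  invFun k := ⟨rIdx f (k.val + 1) - 1, by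
    obtain ⟨h1, h2, -⟩ := rIdx_spec hf (show 1 ≤ k.val+1 by omega) (by have := k.isLt; omega)
    omega⟩
  left_inv k := by
    apply Fin.ext
    show rIdx f (cIdx f (k.val + 1) - 1 + 1) - 1 = k.val
    obtain ⟨h1, h2, -⟩ := cIdx_spec hf (show 1 ≤ k.val+1 by omega) (by have := k.isLt; omega)
    rw [show cIdx f (k.val + 1) - 1 + 1 = cIdx f (k.val + 1) by omega,
      rc_inv hf (show 1 ≤ k.val+1 by omega) (by have := k.isLt; omega)]
    omega
  right_inv k := by
    apply Fin.ext
    show cIdx f (rIdx f (k.val + 1) - 1 + 1) - 1 = k.val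
    obtain ⟨h1, h2, -⟩ := rIdx_spec hf (show 1 ≤ k.val+1 by omega) (by have := k.isLt; omega)
    rw [show rIdx f (k.val + 1) - 1 + 1 = rIdx f (k.val + 1) by omega,
      cr_inv hf (show 1 ≤ k.val+1 by omega) (by have := k.isLt; omega)]
    omega

lemma pnat_permOf {f : (gridMG (n+2)).E → Fin 2} (hf : Good F n f) {i : ℕ}
    (hi1 : 1 ≤ i) (hin : i ≤ n) : pnat (permOf f hf) (i - 1) = cIdx f i - 1 := by
  rw [pnat, dif_pos (show i - 1 < n by omega)]
  show cIdx f (i - 1 + 1) - 1 = cIdx f i - 1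
  rw [show i - 1 + 1 = i by omega]

lemma pnat_permOf_symm {f : (gridMG (n+2)).E → Fin 2} (hf : Good F n f) {j : ℕ}
    (hj1 : 1 ≤ j) (hjn : j ≤ n) : pnat (permOf f hf).symm (j - 1) = rIdx f j - 1 := by
  rw [pnat, dif_pos (show j - 1 < n by omega)]
  show rIdx f (j - 1 + 1) - 1 = rIdx f j - 1
  rw [show j - 1 + 1 = j by omega]

lemma f_eq_phi {f : (gridMG (n+2)).E → Fin 2} (hf : Good F n f) :
    f = phi n (permOf f hf) := by
  funext e
  by_cases hh : e.val.1.1 = e.val.2.1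
  · obtain ⟨hi, hj, he⟩ := eq_mkH e hh
    set i := e.val.1.1.val with hidef
    set j := e.val.1.2.val with hjdef
    rw [he, phi_mkH]
    apply Fin.ext
    rw [← fH_eq f hi hj]
    rcases Nat.eq_zero_or_pos i with h0 | h1
    · rw [if_neg (by omega), h0]
      exact fH_top hf j hj
    rcases Nat.lt_or_ge n i with hbig | hin
    · rw [if_neg (by omega), show i = n+1 by omega]
      exact fH_bot hf j hj
    · obtain ⟨hc1, hcn, hciff⟩ := cIdx_spec hf h1 hin
      rw [pnat_permOf hf h1 hin]
      by_cases hcj : cIdx f i ≤ j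
      · rw [if_pos ⟨h1, hin, by omega⟩]
        exact (hciff j hj).mpr hcj
      · rw [if_neg (by omega)]
        have := fH_le f i j
        have hne : fH f i j ≠ 1 := fun hc => hcj ((hciff j hj).mp hc)
        omega
  · obtain ⟨hi, hj, he⟩ := eq_mkV e hh
    set i := e.val.1.1.val with hidef
    set j := e.val.1.2.val with hjdef
    rw [he, phi_mkV]
    apply Fin.ext
    rw [← fV_eq f hi hj]
    rcases Nat.eq_zero_or_pos j with h0 | h1
    · rw [if_neg (by omega), h0]
      exact fV_left hf i hi
    rcases Nat.lt_or_ge n j with hbig | hjn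
    · rw [if_neg (by omega), show j = n+1 by omega]
      exact fV_right hf i hi
    · obtain ⟨hc1, hcn, hciff⟩ := rIdx_spec hf h1 hjn
      rw [pnat_permOf_symm hf h1 hjn]
      by_cases hcj : rIdx f j ≤ i
      · rw [if_pos ⟨h1, hjn, by omega⟩]
        exact (hciff i hi).mpr hcj
      · rw [if_neg (by omega)]
        have := fV_le f i j
        have hne : fV f i j ≠ 1 := fun hc => hcj ((hciff i hi).mp hc)
        omega

end PG

namespace PG
variable {n : ℕ} {F : Type} [Field F]

lemma passPat_eval (v : Fin (n+2) × Fin (n+2)) (a b : Fin 2) (e : (gridMG (n+2)).Inc v) :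
    passPat v a b e = if e.1.val.1.2 = e.1.val.2.2 then a else b := rfl

lemma mkH_congr {i j i' j' : ℕ} {p : i ≤ n+1} {q : j ≤ n} {p' : i' ≤ n+1} {q' : j' ≤ n}
    (hi : i = i') (hj : j = j') : mkH n i j p q = mkH n i' j' p' q' := by
  subst hi; subst hj; rfl

lemma mkV_congr {i j i' j' : ℕ} {p : i ≤ n} {q : j ≤ n+1} {p' : i' ≤ n} {q' : j' ≤ n+1}
    (hi : i = i') (hj : j = j') : mkV n i j p q = mkV n i' j' p' q' := by
  subst hi; subst hj; rfl

lemma inc_cases {v : Fin (n+2) × Fin (n+2)} {i j : ℕ} (hvi : v.1.val = i) (hvj : v.2.val = j)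
    (e : (gridMG (n+2)).Inc v) :
    (∃ (hi : i ≤ n+1) (hjn : j ≤ n), e.1 = mkH n i j hi hjn) ∨
    (∃ (hj1 : 1 ≤ j) (hjb : j - 1 ≤ n), e.1 = mkH n i (j-1) (by omega) hjb) ∨
    (∃ (hin : i ≤ n) (hjb : j ≤ n+1), e.1 = mkV n i j hin hjb) ∨
    (∃ (hi1 : 1 ≤ i) (hib : i - 1 ≤ n) (hjb : j ≤ n+1), e.1 = mkV n (i-1) j hib hjb) := by
  rcases (mem_ends e.1 v).mp e.2 with hv | hv <;>
    rcases edge_cases e.1 with ⟨h1, h2⟩ | ⟨h1, h2⟩ <;>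
    have hv1 := congrArg (fun p => p.1.val) hv <;>
    have hv2 := congrArg (fun p => p.2.val) hv <;>
    have hc1 := congrArg Fin.val h1 <;>
    beta_reduce at hv1 hv2 hc1
  -- v is first endpoint, horizontal
  · obtain ⟨p, q, he⟩ := eq_mkH e.1 h1
    exact Or.inl ⟨by omega, by omega, he.trans (mkH_congr (by omega) (by omega))⟩
  -- v is first endpoint, vertical
  · obtain ⟨p, q, he⟩ := eq_mkV e.1 (by intro hc; have := congrArg Fin.val hc; omega)
    exact Or.inr (Or.inr (Or.inl ⟨by omega, by omega,
      he.trans (mkV_congr (by omega) (by omega))⟩))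
  -- v is second endpoint, horizontal
  · obtain ⟨p, q, he⟩ := eq_mkH e.1 h1
    exact Or.inr (Or.inl ⟨by omega, by omega, he.trans (mkH_congr (by omega) (by omega))⟩)
  -- v is second endpoint, vertical
  · obtain ⟨p, q, he⟩ := eq_mkV e.1 (by intro hc; have := congrArg Fin.val hc; omega)
    exact Or.inr (Or.inr (Or.inr ⟨by omega, by omega, by omega,
      he.trans (mkV_congr (by omega) (by omega))⟩))

lemma pnat_inv (π : Equiv.Perm (Fin n)) {i j : ℕ} (hj1 : 1 ≤ j) (hjn : j ≤ n)
    (h : i = pnat π.symm (j-1) + 1) : 1 ≤ i ∧ i ≤ n ∧ j = pnat π (i-1) + 1 := by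
  have hjlt : j - 1 < n := by omega
  have hv : pnat π.symm (j-1) = (π.symm ⟨j-1, hjlt⟩).val := by rw [pnat, dif_pos hjlt]
  have hlt : pnat π.symm (j-1) < n := by rw [hv]; exact (π.symm _).isLt
  have hilt : i - 1 < n := by omega
  refine ⟨by omega, by omega, ?_⟩
  have hv2 : pnat π (i-1) = (π ⟨i-1, hilt⟩).val := by rw [pnat, dif_pos hilt]
  rw [hv2]
  have he : (⟨i-1, hilt⟩ : Fin n) = π.symm ⟨j-1, hjlt⟩ := by
    apply Fin.ext
    show i - 1 = _
    rw [← hv]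
    omega
  rw [he, Equiv.apply_symm_apply]
  show j = j - 1 + 1
  omega

lemma pnat_inv' (π : Equiv.Perm (Fin n)) {i j : ℕ} (hi1 : 1 ≤ i) (hin : i ≤ n)
    (h : j = pnat π (i-1) + 1) : 1 ≤ j ∧ j ≤ n ∧ i = pnat π.symm (j-1) + 1 := by
  have hilt : i - 1 < n := by omega
  have hv : pnat π (i-1) = (π ⟨i-1, hilt⟩).val := by rw [pnat, dif_pos hilt]
  have hlt : pnat π (i-1) < n := by rw [hv]; exact (π _).isLt
  have hjlt : j - 1 < n := by omega
  refine ⟨by omega, by omega, ?_⟩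
  have hv2 : pnat π.symm (j-1) = (π.symm ⟨j-1, hjlt⟩).val := by rw [pnat, dif_pos hjlt]
  rw [hv2]
  have he : (⟨j-1, hjlt⟩ : Fin n) = π ⟨i-1, hilt⟩ := by
    apply Fin.ext
    show j - 1 = _
    rw [← hv]
    omega
  rw [he, Equiv.symm_apply_apply]
  show i = i - 1 + 1
  omega

lemma mkH_not_vert (i j : ℕ) (p : i ≤ n+1) (q : j ≤ n) :
    ¬ ((mkH n i j p q).val.1.2 = (mkH n i j p q).val.2.2) := fun hc => by
  have := congrArg Fin.val hc
  simp only [mkH] at this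
  omega

lemma mkV_vert (i j : ℕ) (p : i ≤ n) (q : j ≤ n+1) :
    (mkV n i j p q).val.1.2 = (mkV n i j p q).val.2.2 := rfl

lemma resv_phi_sp (π : Equiv.Perm (Fin n)) {v : Fin (n+2) × Fin (n+2)} {i j : ℕ}
    (hvi : v.1.val = i) (hvj : v.2.val = j) (hi1 : 1 ≤ i) (hin : i ≤ n)
    (hsp : j = pnat π (i-1) + 1) :
    resv (phi n π) v = spPat v := by
  obtain ⟨hj1, hjn, hinv⟩ := pnat_inv' π hi1 hin hsp
  funext e
  show phi n π e.1 = spPat v e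
  rw [spPat_eval]
  rcases inc_cases hvi hvj e with ⟨hi, hjn', he⟩ | ⟨hj1', hjb, he⟩ |
    ⟨hin', hjb, he⟩ | ⟨hi1', hib, hjb, he⟩ <;> rw [he]
  · rw [if_pos ((first_mkH _ _ _ _ _).mpr ⟨hvi, hvj⟩), phi_mkH,
      if_pos ⟨hi1, hin, by omega⟩]
  · rw [if_neg (by rw [first_mkH]; rintro ⟨-, hc⟩; omega), phi_mkH,
      if_neg (by omega)]
  · rw [if_pos ((first_mkV _ _ _ _ _).mpr ⟨hvi, hvj⟩), phi_mkV,
      if_pos ⟨hj1, hjn, by omega⟩]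
  · rw [if_neg (by rw [first_mkV]; rintro ⟨hc, -⟩; omega), phi_mkV,
      if_neg (by omega)]

lemma resv_phi_pass (π : Equiv.Perm (Fin n)) {v : Fin (n+2) × Fin (n+2)} {i j : ℕ}
    (hvi : v.1.val = i) (hvj : v.2.val = j)
    (hns : ¬ (1 ≤ i ∧ i ≤ n ∧ j = pnat π (i-1) + 1)) :
    resv (phi n π) v = passPat v
      (if 1 ≤ j ∧ j ≤ n ∧ pnat π.symm (j-1) + 1 ≤ i then 1 else 0)
      (if 1 ≤ i ∧ i ≤ n ∧ pnat π (i-1) + 1 ≤ j then 1 else 0) := by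
  funext e
  show phi n π e.1 = passPat v _ _ e
  rw [passPat_eval]
  rcases inc_cases hvi hvj e with ⟨hi, hjn', he⟩ | ⟨hj1', hjb, he⟩ |
    ⟨hin', hjb, he⟩ | ⟨hi1', hib, hjb, he⟩ <;> rw [he]
  · rw [if_neg (mkH_not_vert _ _ _ _), phi_mkH]
  · rw [if_neg (mkH_not_vert _ _ _ _), phi_mkH]
    have hiff : (1 ≤ i ∧ i ≤ n ∧ pnat π (i-1) + 1 ≤ j - 1) ↔
        (1 ≤ i ∧ i ≤ n ∧ pnat π (i-1) + 1 ≤ j) := by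
      constructor
      · rintro ⟨a, b, c⟩; exact ⟨a, b, by omega⟩
      · rintro ⟨a, b, c⟩
        have hne : j ≠ pnat π (i-1) + 1 := fun hc => hns ⟨a, b, hc⟩
        exact ⟨a, b, by omega⟩
    rw [if_congr hiff rfl rfl]
  · rw [if_pos (mkV_vert _ _ _ _), phi_mkV]
  · rw [if_pos (mkV_vert _ _ _ _), phi_mkV]
    have hiff : (1 ≤ j ∧ j ≤ n ∧ pnat π.symm (j-1) + 1 ≤ i - 1) ↔
        (1 ≤ j ∧ j ≤ n ∧ pnat π.symm (j-1) + 1 ≤ i) := by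
      constructor
      · rintro ⟨a, b, c⟩; exact ⟨a, b, by omega⟩
      · rintro ⟨a, b, c⟩
        have hne : i ≠ pnat π.symm (j-1) + 1 := fun hc => by
          obtain ⟨x, y, z⟩ := pnat_inv π a b hc
          exact hns ⟨x, y, z⟩
        exact ⟨a, b, by omega⟩
    rw [if_congr hiff rfl rfl]

lemma pass_ne_sp {v : Fin (n+2) × Fin (n+2)} (hint : intl n v) (a b : Fin 2) :
    passPat v a b ≠ spPat v := by
  obtain ⟨h1, h2, h3, h4⟩ := hint
  intro h
  have h10 : (1 : Fin 2) ≠ 0 := by decide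
  set eD : (gridMG (n+2)).Inc v := ⟨mkV n v.1.val v.2.val (by omega) (by omega),
    memD v (by omega) (by omega)⟩ with heD
  set eU : (gridMG (n+2)).Inc v := ⟨mkV n (v.1.val - 1) v.2.val (by omega) (by omega),
    memU v (by omega) (by omega) (by omega)⟩ with heU
  have hd := congrFun h eD
  have hu := congrFun h eU
  have hdL : passPat v a b eD = a := by
    rw [passPat_eval]; exact if_pos (mkV_vert v.1.val v.2.val (by omega) (by omega))
  have hdR : spPat v eD = 1 := by
    rw [spPat_eval]
    exact if_pos ((first_mkV v.1.val v.2.val (by omega) (by omega) v).mpr ⟨rfl, rfl⟩)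
  have huL : passPat v a b eU = a := by
    rw [passPat_eval]; exact if_pos (mkV_vert (v.1.val - 1) v.2.val (by omega) (by omega))
  have huR : spPat v eU = 0 := by
    rw [spPat_eval]
    exact if_neg (fun hc => by
      obtain ⟨ha, -⟩ := (first_mkV (v.1.val - 1) v.2.val (by omega) (by omega) v).mp hc
      omega)
  rw [hdL, hdR] at hd
  rw [huL, huR] at hu
  rw [hd] at hu
  exact absurd hu h10

lemma A_eq_bA (π : Equiv.Perm (Fin n)) {v : Fin (n+2) × Fin (n+2)} (hni : ¬ intl n v) :
    (if 1 ≤ v.2.val ∧ v.2.val ≤ n ∧ pnat π.symm (v.2.val - 1) + 1 ≤ v.1.val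
      then (1 : Fin 2) else 0) = bA n v := by
  rw [bA]
  by_cases hj : 1 ≤ v.2.val ∧ v.2.val ≤ n
  · have hr : pnat π.symm (v.2.val - 1) < n := pnat_lt _ _ (by omega)
    have hlt := v.1.isLt
    rcases Nat.lt_or_ge v.1.val (n+1) with hi | hi
    · have hi0 : ¬ (1 ≤ v.1.val ∧ v.1.val ≤ n) → v.1.val = 0 := by omega
      by_cases h0 : 1 ≤ v.1.val ∧ v.1.val ≤ n
      · exact absurd ⟨h0.1, h0.2, hj.1, hj.2⟩ hni
      · rw [if_neg (by have := hi0 h0; omega), if_neg (by omega)]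
    · have : v.1.val = n+1 := by omega
      rw [if_pos ⟨hj.1, hj.2, by omega⟩, if_pos ⟨this, hj.1, hj.2⟩]
  · rw [if_neg (by intro hc; exact hj ⟨hc.1, hc.2.1⟩),
      if_neg (by intro hc; exact hj ⟨hc.2.1, hc.2.2⟩)]

lemma B_eq_bB (π : Equiv.Perm (Fin n)) {v : Fin (n+2) × Fin (n+2)} (hni : ¬ intl n v) :
    (if 1 ≤ v.1.val ∧ v.1.val ≤ n ∧ pnat π (v.1.val - 1) + 1 ≤ v.2.val
      then (1 : Fin 2) else 0) = bB n v := by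
  rw [bB]
  by_cases hj : 1 ≤ v.1.val ∧ v.1.val ≤ n
  · have hr : pnat π (v.1.val - 1) < n := pnat_lt _ _ (by omega)
    have hlt := v.2.isLt
    rcases Nat.lt_or_ge v.2.val (n+1) with hi | hi
    · have hi0 : ¬ (1 ≤ v.2.val ∧ v.2.val ≤ n) → v.2.val = 0 := by omega
      by_cases h0 : 1 ≤ v.2.val ∧ v.2.val ≤ n
      · exact absurd ⟨hj.1, hj.2, h0.1, h0.2⟩ hni
      · rw [if_neg (by have := hi0 h0; omega), if_neg (by omega)]
    · have : v.2.val = n+1 := by omega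
      rw [if_pos ⟨hj.1, hj.2, by omega⟩, if_pos ⟨this, hj.1, hj.2⟩]
  · rw [if_neg (by intro hc; exact hj ⟨hc.1, hc.2.1⟩),
      if_neg (by intro hc; exact hj ⟨hc.2.1, hc.2.2⟩)]

lemma sub_phi (π : Equiv.Perm (Fin n)) (v : Fin (n+2) × Fin (n+2)) :
    sub F n ⟨v, resv (phi n π) v⟩ =
      if h : 1 ≤ v.1.val ∧ v.1.val ≤ n ∧ v.2.val = pnat π (v.1.val - 1) + 1 then
        Sum.inr ⟨⟨v.1.val - 1, by omega⟩, ⟨v.2.val - 1, by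
          have := pnat_lt π (v.1.val - 1) (by omega); omega⟩⟩
      else Sum.inl 1 := by
  by_cases hsp : 1 ≤ v.1.val ∧ v.1.val ≤ n ∧ v.2.val = pnat π (v.1.val - 1) + 1
  · obtain ⟨h1, h2, h3⟩ := hsp
    obtain ⟨hj1, hjn, -⟩ := pnat_inv' π h1 h2 h3
    rw [dif_pos ⟨h1, h2, h3⟩, sub, dif_pos (show intl n v from ⟨h1, h2, hj1, hjn⟩),
      if_pos (resv_phi_sp π rfl rfl h1 h2 h3)]
  · rw [dif_neg hsp]
    have hp := resv_phi_pass π rfl rfl hsp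
    rw [sub]
    by_cases hint : intl n v
    · rw [dif_pos hint, if_neg (by rw [hp]; exact pass_ne_sp hint _ _),
        if_pos ⟨_, _, hp⟩]
    · rw [dif_neg hint, if_pos (by rw [hp, A_eq_bA π hint, B_eq_bB π hint])]

lemma good_phi (π : Equiv.Perm (Fin n)) : Good F n (phi n π) := by
  intro v
  rw [sub_phi]
  split
  · simp
  · simp

lemma fH_phi (π : Equiv.Perm (Fin n)) {i j : ℕ} (hi1 : 1 ≤ i) (hin : i ≤ n) (hj : j ≤ n) :
    fH (phi n π) i j = if pnat π (i-1) + 1 ≤ j then 1 else 0 := by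
  rw [fH_eq _ (show i ≤ n+1 by omega) hj, phi_mkH]
  by_cases h : pnat π (i-1) + 1 ≤ j
  · rw [if_pos ⟨hi1, hin, h⟩, if_pos h]; rfl
  · rw [if_neg (by omega), if_neg h]; rfl

lemma cIdx_phi (π : Equiv.Perm (Fin n)) {i : ℕ} (hi1 : 1 ≤ i) (hin : i ≤ n) :
    cIdx (phi n π) i = pnat π (i-1) + 1 := by
  have hlt : pnat π (i-1) < n := pnat_lt _ _ (by omega)
  have hex : ∃ j, j ≤ n ∧ fH (phi n π) i j = 1 :=
    ⟨pnat π (i-1) + 1, by omega, by rw [fH_phi π hi1 hin (by omega), if_pos le_rfl]⟩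
  rw [cIdx, dif_pos hex]
  rw [Nat.find_eq_iff hex]
  refine ⟨⟨by omega, by rw [fH_phi π hi1 hin (by omega), if_pos le_rfl]⟩, ?_⟩
  rintro m hm ⟨hmn, h1⟩
  rw [fH_phi π hi1 hin hmn, if_neg (by omega)] at h1
  exact absurd h1 (by omega)

lemma permOf_phi (π : Equiv.Perm (Fin n)) :
    permOf (phi n π) (good_phi (F := F) π) = π := by
  apply Equiv.ext
  intro k
  apply Fin.ext
  show cIdx (phi n π) (k.val + 1) - 1 = (π k).val
  have hlt : k.val + 1 - 1 < n := by have := k.isLt; omega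
  have hp : pnat π (k.val + 1 - 1) = (π ⟨k.val + 1 - 1, hlt⟩).val := by
    rw [pnat, dif_pos hlt]
  have hk : (⟨k.val + 1 - 1, hlt⟩ : Fin n) = k :=
    Fin.ext (show k.val + 1 - 1 = k.val by omega)
  rw [cIdx_phi π (by omega) (by have := k.isLt; omega), hp, hk]
  omega

end PG

namespace PG
open MvPolynomial
variable {n : ℕ} {F : Type} [Field F]

lemma toPoly_of_indicator {ι : Type} [Fintype ι] [DecidableEq ι] {Z : ι → Type}
    [∀ i, Fintype (Z i)] {σ : Type} [Fintype σ] [DecidableEq (∀ i, Z i)]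
    (g : σ → ∀ i, Z i) (T : (∀ i, Z i) → F)
    (hT : ∀ a, T a = ∑ s : σ, if a = g s then 1 else 0) :
    toPoly T = ∑ s : σ, ∏ i, (X (⟨i, g s i⟩ : Σ i, Z i) : MvPolynomial (Σ i, Z i) F) := by
  rw [toPoly]
  calc ∑ a : ∀ i, Z i, C (T a) * ∏ i, (X (⟨i, a i⟩ : Σ i, Z i) : MvPolynomial (Σ i, Z i) F)
      = ∑ a : ∀ i, Z i, ∑ s : σ,
          if a = g s then ∏ i, (X (⟨i, a i⟩ : Σ i, Z i) : MvPolynomial (Σ i, Z i) F)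
          else 0 := by
        refine Finset.sum_congr rfl fun a _ => ?_
        rw [hT, map_sum, Finset.sum_mul]
        refine Finset.sum_congr rfl fun s _ => ?_
        rw [apply_ite C, map_one, map_zero, ite_mul, one_mul, zero_mul]
    _ = ∑ s : σ, ∑ a : ∀ i, Z i,
          if a = g s then ∏ i, (X (⟨i, a i⟩ : Σ i, Z i) : MvPolynomial (Σ i, Z i) F)
          else 0 := Finset.sum_comm
    _ = _ := by
        refine Finset.sum_congr rfl fun s _ => ?_
        rw [Finset.sum_ite_eq' Finset.univ (g s)
          (fun a => ∏ i, (X (⟨i, a i⟩ : Σ i, Z i) : MvPolynomial (Σ i, Z i) F)),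
          if_pos (Finset.mem_univ _)]

lemma toPoly_gTensor :
    toPoly (gTensor F (gridMG (n+2)) 2)
      = ∑ f : (gridMG (n+2)).E → Fin 2, ∏ v,
          (X (⟨v, resv f v⟩ : Σ v, ((gridMG (n+2)).Inc v → Fin 2))) := by
  refine toPoly_of_indicator (fun f => resv f) _ fun a => ?_
  rw [gTensor]
  refine Finset.sum_congr rfl fun f _ => ?_
  by_cases h : ∀ (v : Fin (n+2) × Fin (n+2)) (e : (gridMG (n+2)).Inc v), a v e = f e.1
  · rw [if_pos h]
    have hpf : a = (fun f => resv f) f := funext fun v => funext fun e => h v e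
    exact (if_pos hpf).symm
  · rw [if_neg h]
    have hpf : ¬ (a = (fun f => resv f) f) := fun hc => h (fun v e => by rw [hc]; rfl)
    exact (if_neg hpf).symm

lemma toPoly_permTensor :
    toPoly (permTensor F n)
      = ∑ π : Equiv.Perm (Fin n), ∏ k, (X (⟨k, π k⟩ : Σ _ : Fin n, Fin n)) := by
  refine toPoly_of_indicator (fun π : Equiv.Perm (Fin n) => ⇑π) _ fun a => ?_
  rw [permTensor]
  refine Finset.sum_congr rfl fun π _ => ?_
  by_cases h : ∀ i, a i = π i
  · rw [if_pos h]
    have hpf : a = (fun π : Equiv.Perm (Fin n) => ⇑π) π := funext fun i => h i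
    exact (if_pos hpf).symm
  · rw [if_neg h]
    have hpf : ¬ (a = (fun π : Equiv.Perm (Fin n) => ⇑π) π) := fun hc => h (fun i => by rw [hc])
    exact (if_neg hpf).symm

noncomputable def tf (π : Equiv.Perm (Fin n)) (v : Fin (n+2) × Fin (n+2)) :
    MvPolynomial (Σ _ : Fin n, Fin n) F :=
  if h : 1 ≤ v.1.val ∧ v.1.val ≤ n ∧ v.2.val = pnat π (v.1.val - 1) + 1 then
    X (⟨⟨v.1.val - 1, by omega⟩, ⟨v.2.val - 1, by
      have := pnat_lt π (v.1.val - 1) (by omega); omega⟩⟩ : Σ _ : Fin n, Fin n)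
  else 1

lemma prod_sub_phi (π : Equiv.Perm (Fin n)) :
    (∏ v, Sum.elim (fun c => (C c : MvPolynomial (Σ _ : Fin n, Fin n) F)) (fun p => X p)
        (sub F n ⟨v, resv (phi n π) v⟩))
      = ∏ k : Fin n, X (⟨k, π k⟩ : Σ _ : Fin n, Fin n) := by
  have hstep : ∀ v, Sum.elim (fun c => (C c : MvPolynomial (Σ _ : Fin n, Fin n) F))
      (fun p => X p) (sub F n ⟨v, resv (phi n π) v⟩) = tf π v := by
    intro v
    rw [sub_phi, tf]
    by_cases h : 1 ≤ v.1.val ∧ v.1.val ≤ n ∧ v.2.val = pnat π (v.1.val - 1) + 1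
    · rw [dif_pos h, dif_pos h]
      rfl
    · rw [dif_neg h, dif_neg h]
      show (C 1 : MvPolynomial (Σ _ : Fin n, Fin n) F) = 1
      rw [map_one]
  have hprod : (∏ v, Sum.elim (fun c => (C c : MvPolynomial (Σ _ : Fin n, Fin n) F))
      (fun p => X p) (sub F n ⟨v, resv (phi n π) v⟩)) = ∏ v, tf π v :=
    Finset.prod_congr rfl fun v _ => hstep v
  rw [hprod]
  have hemb : ∀ k : Fin n, pnat π k.val + 1 < n + 2 := fun k => by
    have := pnat_lt π k.val k.isLt; omega
  set emb : Fin n → Fin (n+2) × Fin (n+2) := fun k =>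
    (⟨k.val + 1, by have := k.isLt; omega⟩, ⟨pnat π k.val + 1, hemb k⟩) with hembdef
  have hsub := Finset.prod_subset (Finset.subset_univ (Finset.image emb Finset.univ))
    (f := tf (F := F) π) (fun v _ hv => ?_)
  rotate_left
  · -- v not in the image: tf π v = 1
    rw [tf, dif_neg]
    intro h
    apply hv
    rw [Finset.mem_image]
    refine ⟨⟨v.1.val - 1, by omega⟩, Finset.mem_univ _, ?_⟩
    have hp : pnat π (v.1.val - 1) + 1 = v.2.val := h.2.2.symm
    refine Prod.ext_iff.mpr ⟨Fin.ext ?_, Fin.ext ?_⟩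
    · show v.1.val - 1 + 1 = v.1.val
      omega
    · show pnat π (v.1.val - 1) + 1 = v.2.val
      exact hp
  show Finset.univ.prod (tf π) = _
  rw [← hsub, Finset.prod_image (fun a _ b _ hab => ?_)]
  rotate_left
  · -- injectivity of emb
    have := congrArg (fun p => p.1.val) hab
    simp only [hembdef] at this
    exact Fin.ext (by omega)
  refine Finset.prod_congr rfl fun k _ => ?_
  have hcond : 1 ≤ (emb k).1.val ∧ (emb k).1.val ≤ n ∧
      (emb k).2.val = pnat π ((emb k).1.val - 1) + 1 := by
    refine ⟨?_, ?_, ?_⟩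
    · show 1 ≤ k.val + 1
      omega
    · show k.val + 1 ≤ n
      have := k.isLt
      omega
    · show pnat π k.val + 1 = pnat π (k.val + 1 - 1) + 1
      rfl
  rw [tf, dif_pos hcond]
  have e1 : (⟨(emb k).1.val - 1, by omega⟩ : Fin n) = k := Fin.ext rfl
  rw [e1]
  have e2 : (⟨(emb k).2.val - 1, by
      have := pnat_lt π ((emb k).1.val - 1) (by omega); omega⟩ : Fin n) = π k := by
    apply Fin.ext
    show pnat π k.val + 1 - 1 = (π k).val
    rw [pnat, dif_pos k.isLt, Fin.eta]
    omega
  rw [e2]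

lemma main_sum :
    (∑ f : (gridMG (n+2)).E → Fin 2, ∏ v,
        Sum.elim (fun c => (C c : MvPolynomial (Σ _ : Fin n, Fin n) F)) (fun p => X p)
          (sub F n ⟨v, resv f v⟩))
      = ∑ π : Equiv.Perm (Fin n), ∏ k : Fin n, X (⟨k, π k⟩ : Σ _ : Fin n, Fin n) := by
  rw [← Finset.sum_subset
    (Finset.subset_univ (Finset.univ.filter (fun f => Good F n f)))
    (fun f _ hf => ?_)]
  rotate_left
  · -- not Good: product is zero
    have : ¬ Good F n f := fun h => hf (Finset.mem_filter.mpr ⟨Finset.mem_univ _, h⟩)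
    rw [Good] at this
    push_neg at this
    obtain ⟨v, hv⟩ := this
    refine Finset.prod_eq_zero (Finset.mem_univ v) ?_
    rw [hv]
    show (C 0 : MvPolynomial (Σ _ : Fin n, Fin n) F) = 0
    rw [map_zero]
  refine Finset.sum_bij' (fun f hf => permOf f (Finset.mem_filter.mp hf).2)
    (fun π _ => phi n π) (fun f hf => Finset.mem_univ _)
    (fun π _ => Finset.mem_filter.mpr ⟨Finset.mem_univ _, good_phi π⟩)
    (fun f hf => (f_eq_phi (Finset.mem_filter.mp hf).2).symm)
    (fun π _ => permOf_phi π) (fun f hf => ?_)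
  have hgood := (Finset.mem_filter.mp hf).2
  conv_lhs => rw [f_eq_phi hgood]
  rw [prod_sub_phi]

end PG

namespace PG
open MvPolynomial
variable {n : ℕ} {F : Type} [Field F]

lemma sub_inr {v : Fin (n+2) × Fin (n+2)} {y : (gridMG (n+2)).Inc v → Fin 2}
    {p : Σ _ : Fin n, Fin n} (h : sub F n ⟨v, y⟩ = Sum.inr p) : p.1.val = v.1.val - 1 := by
  rw [sub] at h
  by_cases h1 : intl n v
  · rw [dif_pos h1] at h
    by_cases h2 : y = spPat v
    · rw [if_pos h2] at h
      have := Sum.inr.inj h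
      rw [← this]
    · rw [if_neg h2] at h
      by_cases h3 : ∃ a b, y = passPat v a b
      · rw [if_pos h3] at h
        exact absurd h (by simp)
      · rw [if_neg h3] at h
        exact absurd h (by simp)
  · rw [dif_neg h1] at h
    by_cases h4 : y = passPat v (bA n v) (bB n v)
    · rw [if_pos h4] at h
      exact absurd h (by simp)
    · rw [if_neg h4] at h
      exact absurd h (by simp)

end PG



/-- The `n × n` permanent tensor is a simple projection of the graph
tensor of the simple `(n+2) × (n+2)` grid graph with length parameter `2`:
`per_n ≤ₛ T_{G,2}`. -/
theorem permTensor_simpleProj_grid (F : Type) [Field F] (n : ℕ) (hn : 1 ≤ n) :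
    SimpleProj (permTensor F n) (gTensor F (gridMG (n + 2)) 2) := by
  refine ⟨PG.sub F n, ?_, ?_⟩
  · rintro v y y' p p' hp hp'
    have h1 := PG.sub_inr hp
    have h2 := PG.sub_inr hp'
    exact Fin.ext (h1.trans h2.symm)
  · rw [PG.toPoly_permTensor, PG.toPoly_gTensor, map_sum, ← PG.main_sum]
    refine Finset.sum_congr rfl fun f _ => ?_
    rw [map_prod]
    refine Finset.prod_congr rfl fun v _ => ?_
    rw [MvPolynomial.aeval_X]
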